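/- Let (g, ⟨·,·⟩_g, α_g, β_g, ω_g) be a quasi-hom-Lie algebra. Then the loop space ĝ = g ⊗ k[t,t⁻¹] with bracket ⟨x⊗tⁿ, y⊗t^m⟩ = ⟨x,y⟩_g ⊗ t^{n+m}, α = α_g ⊗ id, β = β_g ⊗ id, and ω(x⊗tⁿ, y⊗t^m) = ω_g(x,y) ⊗ id is a quasi-hom-Lie algebra. -/

import Mathlib

structure QhlAlgebra (k : Type*) (L : Type*) [Field k] [CharZero k]
    [AddCommGroup L] [Module k L] where
  bracket : L →ₗ[k] L →ₗ[k] L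
  α : L →ₗ[k] L
  β : L →ₗ[k] L
  Dom : Set (L × L)
  ω : L → L → (L →ₗ[k] L)
  twist : ∀ x y : L, bracket (α x) (α y) = β (α (bracket x y))
  omega_symm : ∀ x y : L, (x, y) ∈ Dom → bracket x y = ω x y (bracket y x)
  jacobi : ∀ x y z : L, (z, x) ∈ Dom → (x, y) ∈ Dom → (y, z) ∈ Dom →
    ω z x (bracket (α x) (bracket y z) + β (bracket x (bracket y z))) +
    ω x y (bracket (α y) (bracket z x) + β (bracket y (bracket z x))) +
    ω y z (bracket (α z) (bracket x y) + β (bracket z (bracket x y))) = 0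

open TensorProduct LaurentPolynomial

section Aux
variable {k L : Type*} [Field k] [AddCommGroup L] [Module k L]

/-- extract the coefficient of `T n` from `L ⊗ k[t,t⁻¹]`. -/
noncomputable def coeffAt (n : ℤ) : L ⊗[k] LaurentPolynomial k →ₗ[k] L :=
  (TensorProduct.rid k L).toLinearMap ∘ₗ
    TensorProduct.map LinearMap.id
      (Finsupp.lapply n ∘ₗ (AddMonoidAlgebra.coeffLinearEquiv k).toLinearMap)

lemma coeffAt_tmul (n m : ℤ) (x : L) :
    (coeffAt n : L ⊗[k] LaurentPolynomial k →ₗ[k] L) (x ⊗ₜ T m) =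
      if m = n then x else 0 := by
  simp only [coeffAt, LinearMap.comp_apply, TensorProduct.map_tmul, LinearMap.id_apply,
    LinearEquiv.coe_coe, TensorProduct.rid_tmul]
  split
  · rename_i hmn
    show (Finsupp.single m (1:k)) n • x = x
    rw [Finsupp.single_apply, if_pos hmn, one_smul]
  · rename_i hmn
    show (Finsupp.single m (1:k)) n • x = 0
    rw [Finsupp.single_apply, if_neg hmn, zero_smul]

lemma tmul_T_inj {x y : L} {n m : ℤ} (h : x ⊗ₜ[k] T (R := k) n = y ⊗ₜ[k] T (R := k) m) :
    x = y ∨ (x = 0 ∧ y = 0) := by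
  rcases eq_or_ne n m with rfl | hnm
  · left
    have := congrArg (coeffAt n : L ⊗[k] LaurentPolynomial k →ₗ[k] L) h
    simpa [coeffAt_tmul] using this
  · right
    constructor
    · have := congrArg (coeffAt n : L ⊗[k] LaurentPolynomial k →ₗ[k] L) h
      simpa [coeffAt_tmul, (Ne.symm hnm)] using this
    · have := congrArg (coeffAt m : L ⊗[k] LaurentPolynomial k →ₗ[k] L) h
      simpa [coeffAt_tmul, hnm, eq_comm] using this

open Classical in
/-- the (well-defined) first factor of a pure tensor `x ⊗ T n`. -/
noncomputable def fstOf (u : L ⊗[k] LaurentPolynomial k) : L :=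
  if h : ∃ x : L, ∃ n : ℤ, u = x ⊗ₜ[k] T (R := k) n then h.choose else 0

lemma fstOf_tmul (x : L) (n : ℤ) : fstOf (x ⊗ₜ[k] T n) = x := by
  have h : ∃ x' : L, ∃ n' : ℤ, x ⊗ₜ[k] T n = x' ⊗ₜ[k] T (R := k) n' :=
    ⟨x, n, rfl⟩
  unfold fstOf
  rw [dif_pos h]
  obtain ⟨n', hn'⟩ := h.choose_spec
  rcases tmul_T_inj hn'.symm with h1 | ⟨h1, h2⟩
  · exact h1
  · exact h1.trans h2.symm

end Aux

theorem stmt11 {k L : Type*} [Field k] [CharZero k] [AddCommGroup L] [Module k L]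
    (Q : QhlAlgebra k L) :
    ∃ Q' : QhlAlgebra k (L ⊗[k] LaurentPolynomial k),
      (∀ (x y : L) (n m : ℤ),
        Q'.bracket (x ⊗ₜ[k] T n) (y ⊗ₜ[k] T m) = Q.bracket x y ⊗ₜ[k] T (n + m)) ∧
      Q'.α = TensorProduct.map Q.α LinearMap.id ∧
      Q'.β = TensorProduct.map Q.β LinearMap.id ∧
      (∀ (x y : L) (n m : ℤ), (x, y) ∈ Q.Dom →
        (x ⊗ₜ[k] T n, y ⊗ₜ[k] T m) ∈ Q'.Dom ∧
        Q'.ω (x ⊗ₜ[k] T n) (y ⊗ₜ[k] T m) = TensorProduct.map (Q.ω x y) LinearMap.id) := by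
  classical
  set R := LaurentPolynomial k
  set br : L ⊗[k] R →ₗ[k] L ⊗[k] R →ₗ[k] L ⊗[k] R :=
    TensorProduct.map₂ Q.bracket (LinearMap.mul k R) with hbr
  have brt : ∀ (x y : L) (p q : R),
      br (x ⊗ₜ[k] p) (y ⊗ₜ[k] q) = Q.bracket x y ⊗ₜ[k] (p * q) := by
    intro x y p q
    simp [hbr, TensorProduct.map₂_apply_tmul]
  have brT : ∀ (x y : L) (n m : ℤ),
      br (x ⊗ₜ[k] T n) (y ⊗ₜ[k] T m) = Q.bracket x y ⊗ₜ[k] T (n + m) := by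
    intro x y n m
    rw [brt, ← T_add]
  refine ⟨{
    bracket := br
    α := TensorProduct.map Q.α LinearMap.id
    β := TensorProduct.map Q.β LinearMap.id
    Dom := {p | ∃ x y : L, ∃ n m : ℤ, p.1 = x ⊗ₜ[k] T n ∧ p.2 = y ⊗ₜ[k] T m ∧
      (x, y) ∈ Q.Dom}
    ω := fun u v => TensorProduct.map (Q.ω (fstOf u) (fstOf v)) LinearMap.id
    twist := ?_
    omega_symm := ?_
    jacobi := ?_ }, brT, rfl, rfl, ?_⟩
  · -- twist
    intro u v
    induction u using TensorProduct.induction_on with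
    | zero => simp
    | tmul x p =>
      induction v using TensorProduct.induction_on with
      | zero => simp
      | tmul y q =>
        simp only [TensorProduct.map_tmul, LinearMap.id_apply, brt, Q.twist]
      | add v₁ v₂ h1 h2 =>
        simp only [map_add, LinearMap.map_add, h1, h2]
    | add u₁ u₂ h1 h2 =>
      simp only [map_add, LinearMap.map_add, LinearMap.add_apply, h1, h2]
  · -- omega_symm
    rintro u v ⟨x, y, n, m, hu, hv, hxy⟩
    dsimp only at hu hv
    subst hu; subst hv
    rw [brT, brT]
    simp only [fstOf_tmul]
    rw [TensorProduct.map_tmul, LinearMap.id_apply, ← Q.omega_symm x y hxy, add_comm]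
  · -- jacobi
    intro u v w h1 h2 h3
    obtain ⟨z₁, x₁, p₁, n₁, hw₁, hu₁, hzx⟩ := h1
    obtain ⟨x₂, y₂, n₂, m₂, hu₂, hv₂, hxy⟩ := h2
    obtain ⟨y₃, z₃, m₃, p₃, hv₃, hw₃, hyz⟩ := h3
    dsimp only at hw₁ hu₁ hu₂ hv₂ hv₃ hw₃
    subst hu₁; subst hv₂; subst hw₁
    have ex : x₂ = x₁ := by
      have := congrArg fstOf hu₂
      simpa [fstOf_tmul] using this.symm
    have ey : y₃ = y₂ := by
      have := congrArg fstOf hv₃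
      simpa [fstOf_tmul] using this.symm
    have ez : z₃ = z₁ := by
      have := congrArg fstOf hw₃
      simpa [fstOf_tmul] using this.symm
    subst ex; subst ey; subst ez
    simp only [fstOf_tmul, TensorProduct.map_tmul, LinearMap.id_apply, brT]
    have e1 : n₁ + (m₂ + p₁) = n₁ + m₂ + p₁ := by ring
    have e2 : m₂ + (p₁ + n₁) = n₁ + m₂ + p₁ := by ring
    have e3 : p₁ + (n₁ + m₂) = n₁ + m₂ + p₁ := by ring
    rw [e1, e2, e3, ← TensorProduct.add_tmul, ← TensorProduct.add_tmul,
      ← TensorProduct.add_tmul]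
    simp only [TensorProduct.map_tmul, LinearMap.id_apply]
    rw [← TensorProduct.add_tmul, ← TensorProduct.add_tmul,
      Q.jacobi x₂ y₃ z₃ hzx hxy hyz, TensorProduct.zero_tmul]
  · -- Dom and ω conditions
    intro x y n m hxy
    refine ⟨⟨x, y, n, m, rfl, rfl, hxy⟩, ?_⟩
    show TensorProduct.map (Q.ω (fstOf (x ⊗ₜ[k] T n)) (fstOf (y ⊗ₜ[k] T m)))
      LinearMap.id = _
    rw [fstOf_tmul, fstOf_tmul]
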